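/- The singularity of φ on the hypersurface {q₁ = −1/b} is confined after five steps: there exists a nonzero polynomial G ∈ ℂ[u,v,w] such that for every (u,v,w) ∈ ℂ³ with G(u,v,w) ≠ 0 there is δ > 0 such that for all complex ε with 0 < |ε| < δ the five-fold iterate φ⁵(−1/b + ε, u, v, w) is defined (all denominators occurring in the five successive applications of φ are nonzero), and the second component of φ⁵(−1/b + ε, u, v, w) tends to −1/b as ε → 0. -/

import Mathlib

/-- The map φ(q₁,p₁,q₂,p₂) = ((1+b·q₂)/(q₁q₂p₂), q₂, (1+b·q₁)/(q₁p₁q₂), q₁). -/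
noncomputable def phi (b : ℂ) : ℂ × ℂ × ℂ × ℂ → ℂ × ℂ × ℂ × ℂ :=
  fun x => ((1 + b * x.2.2.1) / (x.1 * x.2.2.1 * x.2.2.2), x.2.2.1,
            (1 + b * x.1) / (x.1 * x.2.1 * x.2.2.1), x.1)


/-- The domain of definition of φ: all denominators are nonzero. -/
def phiDom (x : ℂ × ℂ × ℂ × ℂ) : Prop :=
  x.1 * x.2.1 * x.2.2.1 * x.2.2.2 ≠ 0

noncomputable def fL3 (b u v w ε : ℂ) : ℂ := b*ε - 1
noncomputable def fL1 (b u v w ε : ℂ) : ℂ := (b*u*v + b^3)*ε - u*v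
noncomputable def fL2 (b u v w ε : ℂ) : ℂ := b*v*w*ε + b^2 + b^3*v - v*w
noncomputable def fQa3 (b u v w ε : ℂ) : ℂ :=
  b^2*(1+b*v)*ε + u * fL2 b u v w ε * fL3 b u v w ε
noncomputable def fQb3 (b u v w ε : ℂ) : ℂ :=
  b*(1+b*v)*ε + fL1 b u v w ε * v * w
noncomputable def fQa4 (b u v w ε : ℂ) : ℂ :=
  fL1 b u v w ε * fL2 b u v w ε * w + b^3*(1+b*v) * fQb3 b u v w ε
noncomputable def fQb4 (b u v w ε : ℂ) : ℂ :=
  u * fL1 b u v w ε * fL2 b u v w ε + b^3*ε * fQa3 b u v w ε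

noncomputable def Gpoly (b : ℂ) : MvPolynomial (Fin 3) ℂ :=
  MvPolynomial.X 0 * (MvPolynomial.X 1 * (MvPolynomial.X 2 *
    ((MvPolynomial.C b * MvPolynomial.X 1 + 1) *
     ((MvPolynomial.C (b^2) + MvPolynomial.C (b^3) * MvPolynomial.X 1
         - MvPolynomial.X 1 * MvPolynomial.X 2) *
      (MvPolynomial.C (b^2) * (MvPolynomial.C b * MvPolynomial.X 1 + 1)^2
         - MvPolynomial.X 1 * MvPolynomial.X 2)))))

set_option maxHeartbeats 1000000 in
/-- The key computational lemma: exact formulas for the first five iterates. -/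
lemma key_iter (b u v w ε B L1 L2 L3 Qa3 Qb3 Qa4 Qb4 : ℂ)
    (eB : B = 1 + b*v)
    (eL3 : L3 = b*ε - 1)
    (eL1 : L1 = (b*u*v + b^3)*ε - u*v)
    (eL2 : L2 = b*v*w*ε + b^2 + b^3*v - v*w)
    (eQa3 : Qa3 = b^2*B*ε + u*L2*L3)
    (eQb3 : Qb3 = b*B*ε + L1*v*w)
    (eQa4 : Qa4 = L1*L2*w + b^3*B*Qb3)
    (eQb4 : Qb4 = u*L1*L2 + b^3*ε*Qa3)
    (hb : b ≠ 0) (hu : u ≠ 0) (hv : v ≠ 0) (hw : w ≠ 0)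
    (hB : B ≠ 0) (hε : ε ≠ 0)
    (hL3 : L3 ≠ 0) (hL1 : L1 ≠ 0) (hL2 : L2 ≠ 0)
    (hQa3 : Qa3 ≠ 0) (hQb3 : Qb3 ≠ 0) (hQa4 : Qa4 ≠ 0) (hQb4 : Qb4 ≠ 0) :
    (∀ k < 5, phiDom ((phi b)^[k] (-1 / b + ε, u, v, w))) ∧
    ((phi b)^[5] (-1 / b + ε, u, v, w)).2.1
      = L1*w*Qb4 / (b*u*L3*(Qa3*Qb3)) := by
  have hL3' : b*ε - 1 ≠ 0 := by rw [← eL3]; exact hL3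
  have ha0 : -1 / b + ε = L3 / b := by
    rw [eL3, div_add' _ _ _ hb]; ring
  have hA0 : -1 / b + ε ≠ 0 := by rw [ha0]; exact div_ne_zero hL3 hb
  have key0 : (1 : ℂ) + b * (-1 / b + ε) = b * ε := by
    field_simp
    ring
  have rel1 : L3*(u*v) + b^3*ε = L1 := by rw [eL1, eL3]; ring
  have rel2 : L3*(v*w) + b^2*B = L2 := by rw [eL2, eL3, eB]; ring
  -- step 1
  have h1 : phi b (-1 / b + ε, u, v, w)
      = (b*B/(L3*(v*w)), v, b^2*ε/(L3*(u*v)), -1 / b + ε) := by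
    simp only [phi, Prod.mk.injEq]
    refine ⟨?_, trivial, ?_, trivial⟩
    · rw [← eB, ha0]
      field_simp [hb, hu, hv, hw, hB, hε, hL3]
    · rw [key0, ha0]
      field_simp [hb, hu, hv, hw, hB, hε, hL3]
  -- step 2
  have h2 : phi b (b*B/(L3*(v*w)), v, b^2*ε/(L3*(u*v)), -1 / b + ε)
      = (L1*(v*w)/(b^2*B*ε), b^2*ε/(L3*(u*v)),
         L2*L3*u/(b^3*B*ε), b*B/(L3*(v*w))) := by
    simp only [phi, Prod.mk.injEq]
    refine ⟨?_, trivial, ?_, trivial⟩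
    · rw [← rel1, ha0]
      field_simp [hb, hu, hv, hw, hB, hε, hL3]
    · rw [← rel2]
      field_simp [hb, hu, hv, hw, hB, hε, hL3]
  -- step 3
  have h3 : phi b (L1*(v*w)/(b^2*B*ε), b^2*ε/(L3*(u*v)),
         L2*L3*u/(b^3*B*ε), b*B/(L3*(v*w)))
      = (b^2*ε*Qa3/(u*(L1*L2)), L2*L3*u/(b^3*B*ε),
         b^2*B*Qb3/(L1*L2*w), L1*(v*w)/(b^2*B*ε)) := by
    simp only [phi, Prod.mk.injEq]
    refine ⟨?_, trivial, ?_, trivial⟩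
    · rw [eQa3]
      field_simp [hb, hu, hv, hw, hB, hε, hL1, hL2, hL3]
    · rw [eQb3]
      field_simp [hb, hu, hv, hw, hB, hε, hL1, hL2, hL3]
  -- step 4
  have h4 : phi b (b^2*ε*Qa3/(u*(L1*L2)), L2*L3*u/(b^3*B*ε),
         b^2*B*Qb3/(L1*L2*w), L1*(v*w)/(b^2*B*ε))
      = (u*L2*Qa4/(b^2*(v*w)*(Qa3*Qb3)), b^2*B*Qb3/(L1*L2*w),
         L1*w*Qb4/(b*u*L3*(Qa3*Qb3)), b^2*ε*Qa3/(u*(L1*L2))) := by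
    simp only [phi, Prod.mk.injEq]
    refine ⟨?_, trivial, ?_, trivial⟩
    · rw [eQa4]
      field_simp [hb, hu, hv, hw, hB, hε, hL1, hL2, hL3, hQa3, hQb3]
    · rw [eQb4]
      field_simp [hb, hu, hv, hw, hB, hε, hL1, hL2, hL3, hQa3, hQb3]
  -- iterates
  have i0 : (phi b)^[0] (-1 / b + ε, u, v, w) = (-1 / b + ε, u, v, w) := rfl
  have i1 : (phi b)^[1] (-1 / b + ε, u, v, w)
      = (b*B/(L3*(v*w)), v, b^2*ε/(L3*(u*v)), -1 / b + ε) := by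
    rw [Function.iterate_one]; exact h1
  have i2 : (phi b)^[2] (-1 / b + ε, u, v, w)
      = (L1*(v*w)/(b^2*B*ε), b^2*ε/(L3*(u*v)),
         L2*L3*u/(b^3*B*ε), b*B/(L3*(v*w))) := by
    show (phi b)^[1+1] (-1 / b + ε, u, v, w) = _
    rw [Function.iterate_succ_apply', i1]; exact h2
  have i3 : (phi b)^[3] (-1 / b + ε, u, v, w)
      = (b^2*ε*Qa3/(u*(L1*L2)), L2*L3*u/(b^3*B*ε),
         b^2*B*Qb3/(L1*L2*w), L1*(v*w)/(b^2*B*ε)) := by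
    show (phi b)^[2+1] (-1 / b + ε, u, v, w) = _
    rw [Function.iterate_succ_apply', i2]; exact h3
  have i4 : (phi b)^[4] (-1 / b + ε, u, v, w)
      = (u*L2*Qa4/(b^2*(v*w)*(Qa3*Qb3)), b^2*B*Qb3/(L1*L2*w),
         L1*w*Qb4/(b*u*L3*(Qa3*Qb3)), b^2*ε*Qa3/(u*(L1*L2))) := by
    show (phi b)^[3+1] (-1 / b + ε, u, v, w) = _
    rw [Function.iterate_succ_apply', i3]; exact h4
  constructor
  · intro k hk
    interval_cases k
    · rw [i0]
      exact mul_ne_zero (mul_ne_zero (mul_ne_zero hA0 hu) hv) hw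
    · rw [i1]
      exact mul_ne_zero (mul_ne_zero (mul_ne_zero
        (div_ne_zero (mul_ne_zero hb hB) (mul_ne_zero hL3 (mul_ne_zero hv hw))) hv)
        (div_ne_zero (mul_ne_zero (pow_ne_zero 2 hb) hε) (mul_ne_zero hL3 (mul_ne_zero hu hv)))) hA0
    · rw [i2]
      exact mul_ne_zero (mul_ne_zero (mul_ne_zero
        (div_ne_zero (mul_ne_zero hL1 (mul_ne_zero hv hw))
          (mul_ne_zero (mul_ne_zero (pow_ne_zero 2 hb) hB) hε))
        (div_ne_zero (mul_ne_zero (pow_ne_zero 2 hb) hε) (mul_ne_zero hL3 (mul_ne_zero hu hv))))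
        (div_ne_zero (mul_ne_zero (mul_ne_zero hL2 hL3) hu)
          (mul_ne_zero (mul_ne_zero (pow_ne_zero 3 hb) hB) hε)))
        (div_ne_zero (mul_ne_zero hb hB) (mul_ne_zero hL3 (mul_ne_zero hv hw)))
    · rw [i3]
      exact mul_ne_zero (mul_ne_zero (mul_ne_zero
        (div_ne_zero (mul_ne_zero (mul_ne_zero (pow_ne_zero 2 hb) hε) hQa3)
          (mul_ne_zero hu (mul_ne_zero hL1 hL2)))
        (div_ne_zero (mul_ne_zero (mul_ne_zero hL2 hL3) hu)
          (mul_ne_zero (mul_ne_zero (pow_ne_zero 3 hb) hB) hε)))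
        (div_ne_zero (mul_ne_zero (mul_ne_zero (pow_ne_zero 2 hb) hB) hQb3)
          (mul_ne_zero (mul_ne_zero hL1 hL2) hw)))
        (div_ne_zero (mul_ne_zero hL1 (mul_ne_zero hv hw))
          (mul_ne_zero (mul_ne_zero (pow_ne_zero 2 hb) hB) hε))
    · rw [i4]
      exact mul_ne_zero (mul_ne_zero (mul_ne_zero
        (div_ne_zero (mul_ne_zero (mul_ne_zero hu hL2) hQa4)
          (mul_ne_zero (mul_ne_zero (pow_ne_zero 2 hb) (mul_ne_zero hv hw))
            (mul_ne_zero hQa3 hQb3)))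
        (div_ne_zero (mul_ne_zero (mul_ne_zero (pow_ne_zero 2 hb) hB) hQb3)
          (mul_ne_zero (mul_ne_zero hL1 hL2) hw)))
        (div_ne_zero (mul_ne_zero (mul_ne_zero hL1 hw) hQb4)
          (mul_ne_zero (mul_ne_zero (mul_ne_zero hb hu) hL3)
            (mul_ne_zero hQa3 hQb3))))
        (div_ne_zero (mul_ne_zero (mul_ne_zero (pow_ne_zero 2 hb) hε) hQa3)
          (mul_ne_zero hu (mul_ne_zero hL1 hL2)))
  · show ((phi b)^[4+1] (-1 / b + ε, u, v, w)).2.1 = _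
    rw [Function.iterate_succ_apply', i4]
    rfl

set_option maxHeartbeats 1000000 in
theorem singularity_confined_after_five_steps (b : ℂ) (hb : b ≠ 0) :
    ∃ G : MvPolynomial (Fin 3) ℂ, G ≠ 0 ∧
      ∀ u v w : ℂ, MvPolynomial.eval ![u, v, w] G ≠ 0 →
        ∃ δ : ℝ, 0 < δ ∧
          (∀ ε : ℂ, 0 < ‖ε‖ → ‖ε‖ < δ →
            ∀ k < 5, phiDom ((phi b)^[k] (-1 / b + ε, u, v, w))) ∧
          Filter.Tendsto (fun ε : ℂ => ((phi b)^[5] (-1 / b + ε, u, v, w)).2.1)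
            (nhdsWithin 0 {(0 : ℂ)}ᶜ) (nhds (-1 / b)) := by
  classical
  refine ⟨Gpoly b, ?_, ?_⟩
  · -- G ≠ 0
    have f1 : (MvPolynomial.C b * MvPolynomial.X 1 + 1 : MvPolynomial (Fin 3) ℂ) ≠ 0 := by
      intro h
      have := congrArg MvPolynomial.constantCoeff h
      simp at this
    have f2 : (MvPolynomial.C (b^2) + MvPolynomial.C (b^3) * MvPolynomial.X 1
        - MvPolynomial.X 1 * MvPolynomial.X 2 : MvPolynomial (Fin 3) ℂ) ≠ 0 := by
      intro h
      have := congrArg MvPolynomial.constantCoeff h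
      simp [hb] at this
    have f3 : (MvPolynomial.C (b^2) * (MvPolynomial.C b * MvPolynomial.X 1 + 1)^2
        - MvPolynomial.X 1 * MvPolynomial.X 2 : MvPolynomial (Fin 3) ℂ) ≠ 0 := by
      intro h
      have := congrArg MvPolynomial.constantCoeff h
      simp [hb] at this
    unfold Gpoly
    exact mul_ne_zero (MvPolynomial.X_ne_zero 0) (mul_ne_zero (MvPolynomial.X_ne_zero 1)
      (mul_ne_zero (MvPolynomial.X_ne_zero 2) (mul_ne_zero f1 (mul_ne_zero f2 f3))))
  · intro u v w hG
    have heval : MvPolynomial.eval ![u, v, w] (Gpoly b)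
        = u * (v * (w * ((b*v + 1) * ((b^2 + b^3*v - v*w) * (b^2*(b*v+1)^2 - v*w))))) := by
      simp [Gpoly]
    rw [heval] at hG
    have hu : u ≠ 0 := fun h => hG (by rw [h]; ring)
    have hv : v ≠ 0 := fun h => hG (by rw [h]; ring)
    have hw : w ≠ 0 := fun h => hG (by rw [h]; ring)
    have hbv0 : b*v + 1 ≠ 0 := fun h => hG (by rw [h]; ring)
    have hK1 : b^2 + b^3*v - v*w ≠ 0 := fun h => hG (by rw [h]; ring)
    have hK2 : b^2*(b*v+1)^2 - v*w ≠ 0 := fun h => hG (by rw [h]; ring)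
    have hbv : 1 + b*v ≠ 0 := by rw [add_comm]; exact hbv0
    -- eventual nonvanishing of all π-factors
    have cL3 : Continuous (fun ε : ℂ => fL3 b u v w ε) := by unfold fL3; fun_prop
    have cL1 : Continuous (fun ε : ℂ => fL1 b u v w ε) := by unfold fL1; fun_prop
    have cL2 : Continuous (fun ε : ℂ => fL2 b u v w ε) := by unfold fL2; fun_prop
    have cQa3 : Continuous (fun ε : ℂ => fQa3 b u v w ε) := by
      unfold fQa3 fL2 fL3; fun_prop
    have cQb3 : Continuous (fun ε : ℂ => fQb3 b u v w ε) := by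
      unfold fQb3 fL1; fun_prop
    have cQa4 : Continuous (fun ε : ℂ => fQa4 b u v w ε) := by
      unfold fQa4 fQb3 fL1 fL2; fun_prop
    have cQb4 : Continuous (fun ε : ℂ => fQb4 b u v w ε) := by
      unfold fQb4 fQa3 fL1 fL2 fL3; fun_prop
    have z3 : fL3 b u v w 0 = -1 := by unfold fL3; ring
    have z1 : fL1 b u v w 0 = -(u*v) := by unfold fL1; ring
    have z2 : fL2 b u v w 0 = b^2 + b^3*v - v*w := by unfold fL2; ring
    have za3 : fQa3 b u v w 0 = -(u*(b^2 + b^3*v - v*w)) := by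
      unfold fQa3 fL2 fL3; ring
    have zb3 : fQb3 b u v w 0 = -(u*v*(v*w)) := by unfold fQb3 fL1; ring
    have za4 : fQa4 b u v w 0 = -(u*v*w*(b^2*(b*v+1)^2 - v*w)) := by
      unfold fQa4 fQb3 fL1 fL2; ring
    have zb4 : fQb4 b u v w 0 = -(u*(u*v)*(b^2 + b^3*v - v*w)) := by
      unfold fQb4 fQa3 fL1 fL2 fL3; ring
    have n3 : fL3 b u v w 0 ≠ 0 := by rw [z3]; norm_num
    have n1 : fL1 b u v w 0 ≠ 0 := by
      rw [z1]; exact neg_ne_zero.mpr (mul_ne_zero hu hv)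
    have n2 : fL2 b u v w 0 ≠ 0 := by rw [z2]; exact hK1
    have na3 : fQa3 b u v w 0 ≠ 0 := by
      rw [za3]; exact neg_ne_zero.mpr (mul_ne_zero hu hK1)
    have nb3 : fQb3 b u v w 0 ≠ 0 := by
      rw [zb3]; exact neg_ne_zero.mpr (mul_ne_zero (mul_ne_zero hu hv) (mul_ne_zero hv hw))
    have na4 : fQa4 b u v w 0 ≠ 0 := by
      rw [za4]
      exact neg_ne_zero.mpr (mul_ne_zero (mul_ne_zero (mul_ne_zero hu hv) hw) hK2)
    have nb4 : fQb4 b u v w 0 ≠ 0 := by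
      rw [zb4]
      exact neg_ne_zero.mpr (mul_ne_zero (mul_ne_zero hu (mul_ne_zero hu hv)) hK1)
    have Hev : ∀ᶠ ε : ℂ in nhds 0,
        fL3 b u v w ε ≠ 0 ∧ fL1 b u v w ε ≠ 0 ∧ fL2 b u v w ε ≠ 0 ∧
        fQa3 b u v w ε ≠ 0 ∧ fQb3 b u v w ε ≠ 0 ∧ fQa4 b u v w ε ≠ 0 ∧
        fQb4 b u v w ε ≠ 0 :=
      ((cL3.continuousAt.eventually_ne n3).and
        ((cL1.continuousAt.eventually_ne n1).and
          ((cL2.continuousAt.eventually_ne n2).and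
            ((cQa3.continuousAt.eventually_ne na3).and
              ((cQb3.continuousAt.eventually_ne nb3).and
                ((cQa4.continuousAt.eventually_ne na4).and
                  (cQb4.continuousAt.eventually_ne nb4)))))))
    obtain ⟨δ, hδpos, hball⟩ := Metric.eventually_nhds_iff.mp Hev
    refine ⟨δ, hδpos, ?_, ?_⟩
    · intro ε hε0 hεδ
      have hε : ε ≠ 0 := norm_pos_iff.mp hε0
      obtain ⟨m3, m1, m2, ma3, mb3, ma4, mb4⟩ :=
        hball (by rw [dist_zero_right]; exact hεδ)
      exact (key_iter b u v w ε (1 + b*v) (fL1 b u v w ε) (fL2 b u v w ε) (fL3 b u v w ε)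
        (fQa3 b u v w ε) (fQb3 b u v w ε) (fQa4 b u v w ε) (fQb4 b u v w ε)
        rfl rfl rfl rfl rfl rfl rfl rfl hb hu hv hw hbv hε m3 m1 m2 ma3 mb3 ma4 mb4).1
    · have hgc : ContinuousAt (fun ε : ℂ =>
          fL1 b u v w ε * w * fQb4 b u v w ε /
            (b*u*fL3 b u v w ε*(fQa3 b u v w ε * fQb3 b u v w ε))) 0 := by
        refine ContinuousAt.div ?_ ?_ ?_
        · exact (cL1.continuousAt.mul continuousAt_const).mul cQb4.continuousAt
        · exact (continuousAt_const.mul cL3.continuousAt).mul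
            (cQa3.continuousAt.mul cQb3.continuousAt)
        · show b*u*fL3 b u v w 0*(fQa3 b u v w 0 * fQb3 b u v w 0) ≠ 0
          exact mul_ne_zero (mul_ne_zero (mul_ne_zero hb hu) n3) (mul_ne_zero na3 nb3)
      have hg0 : fL1 b u v w 0 * w * fQb4 b u v w 0 /
            (b*u*fL3 b u v w 0*(fQa3 b u v w 0 * fQb3 b u v w 0)) = -1 / b := by
        rw [z1, z3, za3, zb3, zb4]
        rw [div_eq_div_iff (by
          exact mul_ne_zero (mul_ne_zero (mul_ne_zero hb hu) (by norm_num))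
            (mul_ne_zero (neg_ne_zero.mpr (mul_ne_zero hu hK1))
              (neg_ne_zero.mpr (mul_ne_zero (mul_ne_zero hu hv) (mul_ne_zero hv hw)))))
          hb]
        ring
      have hTend : Filter.Tendsto (fun ε : ℂ =>
          fL1 b u v w ε * w * fQb4 b u v w ε /
            (b*u*fL3 b u v w ε*(fQa3 b u v w ε * fQb3 b u v w ε)))
          (nhdsWithin 0 {(0 : ℂ)}ᶜ) (nhds (-1 / b)) := by
        have := hgc.tendsto
        rw [hg0] at this
        exact this.mono_left nhdsWithin_le_nhds
      refine Filter.Tendsto.congr' ?_ hTend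
      filter_upwards [Hev.filter_mono nhdsWithin_le_nhds, self_mem_nhdsWithin]
        with ε hfac hmem
      obtain ⟨m3, m1, m2, ma3, mb3, ma4, mb4⟩ := hfac
      have hε : ε ≠ 0 := hmem
      exact (key_iter b u v w ε (1 + b*v) (fL1 b u v w ε) (fL2 b u v w ε) (fL3 b u v w ε)
        (fQa3 b u v w ε) (fQb3 b u v w ε) (fQa4 b u v w ε) (fQb4 b u v w ε)
        rfl rfl rfl rfl rfl rfl rfl rfl hb hu hv hw hbv hε m3 m1 m2 ma3 mb3 ma4 mb4).2.symm
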